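/- Let (A, φ, ψ) be a unital C*-algebra with two states and a ∈ A. Then the conditionally free R-transform satisfies the analytic relation R_a^{(φ,ψ)}(G_a^ψ(λ)) = λ − 1/G_a^φ(λ) for λ with |λ| sufficiently large (specifically 1/|λ| in the domain where k_a is invertible and G_a^φ(λ) ≠ 0). -/
import Mathlib


open scoped ComplexOrder

theorem key {A : Type*} [NormedRing A] [NormedAlgebra ℂ A] [CompleteSpace A]
    (a : A) (lam : ℂ) (hlam : ‖a‖ < ‖lam‖) :
    Ring.inverse (lam • (1 : A) - a) = lam⁻¹ • Ring.inverse (1 - lam⁻¹ • a) := by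
  have hlam0 : lam ≠ 0 := by
    intro h; simp [h] at hlam; exact absurd hlam (not_lt.2 (norm_nonneg a))
  have hnorm : ‖lam⁻¹ • a‖ < 1 := by
    rw [norm_smul, norm_inv]
    rw [inv_mul_lt_one₀ (lt_of_le_of_lt (norm_nonneg a) hlam)]
    simpa using hlam
  set u := Units.oneSub (lam⁻¹ • a) hnorm with hu
  have hb : (1 : A) - lam⁻¹ • a = (u : A) := rfl
  have heq : lam • (1 : A) - a = lam • ((u : A)) := by
    rw [← hb, smul_sub, smul_smul, mul_inv_cancel₀ hlam0, one_smul]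
  have hunit : lam • (u : A) = ((Units.map (algebraMap ℂ A).toMonoidHom
      (Units.mk0 lam hlam0)) * u : Aˣ) := by
    simp [Algebra.smul_def]
  rw [heq, hb, hunit, Ring.inverse_unit, Ring.inverse_unit]
  simp [mul_inv_rev, Algebra.smul_def, Units.val_inv_eq_inv_val]
  all_goals exact (Algebra.commutes _ _).symm

/-- analytic relation for the conditionally free R-transform:
`R_a^{(φ,ψ)}(G_a^ψ(λ)) = λ - 1/G_a^φ(λ)` for `|λ| > ‖a‖` with `G_a^φ(λ) ≠ 0`.
Here `k_a(t) = t ψ((1-ta)⁻¹)` satisfies `k_a(λ⁻¹) = G_a^ψ(λ)` (so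
`k_a⁻¹(G_a^ψ(λ)) = λ⁻¹`), and
`R_a^{(φ,ψ)}(G_a^ψ(λ)) = 1/λ⁻¹ - 1/k̃_a(λ⁻¹) = λ - 1/G_a^φ(λ)`. -/
theorem stmt_12 {A : Type*} [NormedRing A] [StarRing A] [CStarRing A]
    [NormedAlgebra ℂ A] [CompleteSpace A] [StarModule ℂ A]
    (φ ψ : A →L[ℂ] ℂ) (hφ1 : φ 1 = 1) (hψ1 : ψ 1 = 1)
    (hφpos : ∀ x : A, 0 ≤ φ (star x * x)) (hψpos : ∀ x : A, 0 ≤ ψ (star x * x))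
    (a : A) (lam : ℂ) (hlam : ‖a‖ < ‖lam‖)
    (hG : φ (Ring.inverse (lam • (1 : A) - a)) ≠ 0) :
    -- `k_a(λ⁻¹) = G_a^ψ(λ)`, i.e. `λ⁻¹` is the `k_a`-preimage of `G_a^ψ(λ)`
    lam⁻¹ * ψ (Ring.inverse (1 - lam⁻¹ • a)) =
      ψ (Ring.inverse (lam • (1 : A) - a)) ∧
    -- `R_a^{(φ,ψ)}(G_a^ψ(λ)) = λ - 1/G_a^φ(λ)`
    1 / lam⁻¹ - 1 / (lam⁻¹ * φ (Ring.inverse (1 - lam⁻¹ • a))) =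
      lam - 1 / φ (Ring.inverse (lam • (1 : A) - a)) := by
  have hlam0 : lam ≠ 0 := by
    intro h; simp [h] at hlam; exact absurd hlam (not_lt.2 (norm_nonneg a))
  rw [key a lam hlam, map_smul, map_smul]
  refine ⟨rfl, ?_⟩
  rw [one_div, inv_inv, smul_eq_mul]
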